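/- Let P be a partition of T (or of T_V ⊇ S), S a system, and A an attacker (equivalence relation on T). Then ⋃_{X∈P} K(S∩X, A) ≤_EM K(S, A): (i) every knowledge set of some S∩X is contained in a knowledge set of S for the same observation, and (ii) every knowledge set of S contains a knowledge set of S∩X for some X ∈ P. -/

import Mathlib

open Set

section Defs

variable {α : Type*}

/-- A K-space over `W`: a collection of nonempty subsets of `W` covering `W`. -/
def Covers (K : Set (Set α)) (W : Set α) : Prop :=
  (∀ X ∈ K, X.Nonempty) ∧ ⋃₀ K = W

/-- A partition of `W`: a K-space whose members are pairwise disjoint. -/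
def IsPart (K : Set (Set α)) (W : Set α) : Prop :=
  Covers K W ∧ ∀ X ∈ K, ∀ Y ∈ K, X ≠ Y → X ∩ Y = ∅

/-- Upper (Smyth) ordering. -/
def leU (K₁ K₂ : Set (Set α)) : Prop := ∀ X₂ ∈ K₂, ∃ X₁ ∈ K₁, X₁ ⊆ X₂

/-- Lower (Hoare) ordering. -/
def leL (K₁ K₂ : Set (Set α)) : Prop := ∀ X₁ ∈ K₁, ∃ X₂ ∈ K₂, X₁ ⊆ X₂

/-- Egli-Milner ordering. -/
def leEM (K₁ K₂ : Set (Set α)) : Prop := leU K₁ K₂ ∧ leL K₁ K₂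

/-- `P₁` refines `P₂`: every block of `P₁` is contained in some block of `P₂`. -/
def Refines (P₁ P₂ : Set (Set α)) : Prop := ∀ X₁ ∈ P₁, ∃ X₂ ∈ P₂, X₁ ⊆ X₂

/-- `X` answers query `Q` relative to universe `U`. -/
def Answers (U X Q : Set α) : Prop := X ⊆ Q ∨ X ⊆ U \ Q

def CanAnswer (U : Set α) (K : Set (Set α)) (Q : Set α) : Prop := ∃ X ∈ K, Answers U X Q

def WillAnswer (U : Set α) (K : Set (Set α)) (Q : Set α) : Prop := ∀ X ∈ K, Answers U X Q

/-- Can-answer ordering relative to universe `U`. -/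
def leCA (U : Set α) (K₁ K₂ : Set (Set α)) : Prop :=
  ∀ Q ⊆ U, CanAnswer U K₂ Q → CanAnswer U K₁ Q

/-- Will-answer ordering relative to universe `U`. -/
def leWA (U : Set α) (K₁ K₂ : Set (Set α)) : Prop :=
  ∀ Q ⊆ U, WillAnswer U K₂ Q → WillAnswer U K₁ Q

/-- `K` can confirm fact `F`. -/
def CanConfirm (K : Set (Set α)) (F : Set α) : Prop := ∃ X ∈ K, X ⊆ F

/-- `K` can have uncertainty `F`. -/
def HasUncertainty (K : Set (Set α)) (F : Set α) : Prop := ∃ X ∈ K, F ⊆ X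

/-- The observation (equivalence class of attacker `A`) containing trace `t`. -/
def obsClass {T : Type*} (A : Setoid T) (t : T) : Set T := {u | A.r u t}

/-- The K-space of attacker `A` for system `S` with subject function `Φ`:
knowledge sets `Φ(O ∩ S)` for observations `O` with `O ∩ S ≠ ∅`. -/
def kspace {T D : Type*} (Φ : T → D) (S : Set T) (A : Setoid T) : Set (Set D) :=
  {X | ∃ t ∈ S, X = Φ '' (obsClass A t ∩ S)}

/-- `R` (a set of pairs) is an equivalence relation on the subset `V`. -/
def IsEROn (V : Set α) (R : Set (α × α)) : Prop :=
  R ⊆ V ×ˢ V ∧ (∀ v ∈ V, (v, v) ∈ R) ∧ (∀ x y, (x, y) ∈ R → (y, x) ∈ R) ∧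
    (∀ x y z, (x, y) ∈ R → (y, z) ∈ R → (x, z) ∈ R)

/-- The equivalence class of `v` under the relation-as-set-of-pairs `R`. -/
def classOf (R : Set (α × α)) (v : α) : Set α := {u | (u, v) ∈ R}

/-- The partition `⟦R⟧` of `V` corresponding to an equivalence relation `R` on `V`. -/
def classPart (V : Set α) (R : Set (α × α)) : Set (Set α) :=
  {C | ∃ v ∈ V, C = classOf R v}

end Defs

/-- for a partition `P` of the traces,
`⋃_{X ∈ P} K(S ∩ X, A) ≤_EM K(S, A)`. -/
theorem stmt14 {T D : Type*} (Φ : T → D) (S : Set T) (A : Setoid T)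
    (P : Set (Set T)) (hP : IsPart P Set.univ) :
    leEM (⋃ X ∈ P, kspace Φ (S ∩ X) A) (kspace Φ S A) := by
  constructor
  · -- leU
    rintro X₂ ⟨t, htS, rfl⟩
    have ht : t ∈ ⋃₀ P := by rw [hP.1.2]; trivial
    obtain ⟨X, hXP, htX⟩ := ht
    refine ⟨Φ '' (obsClass A t ∩ (S ∩ X)), ?_, ?_⟩
    · exact Set.mem_biUnion hXP ⟨t, ⟨htS, htX⟩, rfl⟩
    · exact Set.image_mono (Set.inter_subset_inter_right _ Set.inter_subset_left)
  · -- leL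
    rintro X₁ hX₁
    simp only [Set.mem_iUnion] at hX₁
    obtain ⟨X, hXP, t, ⟨htS, htX⟩, rfl⟩ := hX₁
    exact ⟨Φ '' (obsClass A t ∩ S), ⟨t, htS, rfl⟩,
      Set.image_mono (Set.inter_subset_inter_right _ Set.inter_subset_left)⟩
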